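/- For 0 ≤ r ≤ m−2, the cyclic derivative ascendant of the extended cyclic code with exponent set {j ∈ {0,…,2^m−2} : wt(j̄) ≤ r} (the Reed–Muller code RM(r,m)) is the extended cyclic code with exponent set {j ∈ {0,…,2^m−2} : wt(j̄) ≤ r+1} (the Reed–Muller code RM(r+1,m)). Equivalently, for s ∈ {0,…,2^m−2}: cc(P(s)) ⊆ {j : wt(j̄) ≤ r} if and only if wt(s̄) ≤ r+1. -/

import Mathlib

/-- Hamming weight of the `m`-bit binary expansion of `s`. -/
def wtm (m s : ℕ) : ℕ := ((Finset.range m).filter fun j => s.testBit j).card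

/-- `Pset s`: the set of nonnegative integers whose binary expansion is
properly covered by that of `s`. -/
def Pset (s : ℕ) : Finset ℕ :=
  (Finset.range (s + 1)).filter fun k => k ||| s = s ∧ k ≠ s

/-- The cyclotomic coset `C_s` modulo `n = 2^m - 1`. -/
def cycCoset (n m s : ℕ) : Finset ℕ := (Finset.range m).image fun j => 2 ^ j * s % n

/-- `cc S`: union of all cyclotomic cosets meeting `S`. -/
def ccSet (n m : ℕ) (S : Finset ℕ) : Finset ℕ := S.biUnion (cycCoset n m)

/-- `cr S`: the set of coset representatives (minimal elements of the cosets) of `S`. -/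
def crSet (n m : ℕ) (S : Finset ℕ) : Finset ℕ :=
  (ccSet n m S).filter fun s => ∀ t ∈ cycCoset n m s, s ≤ t

/-- `S` is an exponent set: a set of residues mod `n` closed under doubling mod `n`. -/
def IsExpSet (n : ℕ) (S : Finset ℕ) : Prop :=
  (∀ j ∈ S, j < n) ∧ ∀ j ∈ S, 2 * j % n ∈ S

/-- The extended cyclic code of length `2^m` with exponent set `S`. -/
def extCyclicCode {F : Type*} [Field F] (n : ℕ) (S : Finset ℕ) : Set (F → F) :=
  { c | ∃ A : ℕ → F, (∀ j ∈ S, A (2 * j % n) = A j ^ 2) ∧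
      ∀ x : F, c x = ∑ j ∈ S, A j * x ^ j }

/-- The set of derivatives of the codewords of `C` in direction `β`. -/
def derivSet {F : Type*} [Field F] (β : F) (C : Set (F → F)) : Set (F → F) :=
  { d | ∃ c ∈ C, d = fun x => c (x + β) - c x }

/-- Minimum Hamming distance (= minimum weight) of a code. -/
noncomputable def minDist {F : Type*} [Field F] [Fintype F] [DecidableEq F]
    (C : Set (F → F)) : ℕ :=
  sInf { w | ∃ c ∈ C, c ≠ (0 : F → F) ∧ hammingNorm c = w }

section CDAhelpers

open Finset

namespace CDA

def Sub (k j : ℕ) : Prop := ∀ i, k.testBit i = true → j.testBit i = true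

lemma sub_iff_and {k j : ℕ} : Sub k j ↔ k &&& j = k := by
  constructor
  · intro h
    apply Nat.eq_of_testBit_eq
    intro i
    rw [Nat.testBit_and]
    cases hk : k.testBit i
    · simp
    · simp [h i hk]
  · intro h i hi
    have := congrArg (fun x => x.testBit i) h
    simp only [Nat.testBit_and, hi, Bool.true_and] at this
    exact this

lemma sub_iff_or {k j : ℕ} : Sub k j ↔ k ||| j = j := by
  constructor
  · intro h
    apply Nat.eq_of_testBit_eq
    intro i
    rw [Nat.testBit_or]
    cases hk : k.testBit i
    · simp
    · simp [h i hk]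
  · intro h i hi
    have := congrArg (fun x => x.testBit i) h
    simp only [Nat.testBit_or, hi, Bool.true_or] at this
    exact this.symm

lemma Sub.le {k j : ℕ} (h : Sub k j) : k ≤ j := by
  rw [sub_iff_and] at h
  calc k = k &&& j := h.symm
    _ ≤ j := Nat.and_le_right

lemma wtm_eq_sum (m s : ℕ) : wtm m s = ∑ i ∈ range m, if s.testBit i then 1 else 0 :=
  Finset.card_filter _ _

lemma wtm_succ_top (m s : ℕ) :
    wtm (m+1) s = wtm m s + (if s.testBit m then 1 else 0) := by
  rw [wtm_eq_sum, wtm_eq_sum, Finset.sum_range_succ]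

lemma wtm_succ_bot (m s : ℕ) :
    wtm (m+1) s = wtm m (s/2) + (if s.testBit 0 then 1 else 0) := by
  rw [wtm_eq_sum, wtm_eq_sum, Finset.sum_range_succ']
  simp only [Nat.testBit_add_one]

lemma wtm_of_lt {t m s : ℕ} (h : t ≤ m) (hs : s < 2 ^ t) : wtm m s = wtm t s := by
  induction m with
  | zero => simp [Nat.le_zero.mp h]
  | succ m ih =>
    rcases Nat.eq_or_lt_of_le h with h' | h'
    · rw [h']
    · have hm : t ≤ m := by omega
      rw [wtm_succ_top, ih hm,
        Nat.testBit_eq_false_of_lt (lt_of_lt_of_le hs (Nat.pow_le_pow_right (by norm_num) hm))]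
      simp



section double

variable {m : ℕ}

lemma pow_split (hm : 0 < m) : 2 ^ m = 2 * 2 ^ (m - 1) := by
  conv_lhs => rw [show m = (m-1)+1 by omega]
  ring

lemma div_le_one (hm : 0 < m) {k : ℕ} (hk : k < 2 ^ m - 1) : k / 2 ^ (m - 1) ≤ 1 := by
  have h2 := pow_split hm
  have hc : 0 < 2 ^ (m - 1) := Nat.pow_pos (by norm_num)
  have : k / 2 ^ (m-1) < 2 := by rw [Nat.div_lt_iff_lt_mul hc]; omega
  omega

lemma d_eq' (hm : 0 < m) {k : ℕ} (hk : k < 2 ^ m - 1) :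
    2 * k % (2 ^ m - 1) = 2 * (k % 2 ^ (m - 1)) + k / 2 ^ (m - 1) := by
  have h2 := pow_split hm
  have hc : 0 < 2 ^ (m - 1) := Nat.pow_pos (by norm_num)
  have hb := div_le_one hm hk
  set c := 2 ^ (m - 1) with hcdef
  set b := k / c with hbdef
  set l := k % c with hldef
  have hbl : c * b + l = k := Nat.div_add_mod k c
  have hlc : l < c := Nat.mod_lt _ hc
  rcases Nat.le_one_iff_eq_zero_or_eq_one.mp hb with h | h <;> rw [h] at hbl ⊢
  · have key : 2 * k = 2 * l + 0 + 0 * (2 ^ m - 1) := by omega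
    rw [key, Nat.add_mul_mod_self_right]
    exact Nat.mod_eq_of_lt (by omega)
  · have key : 2 * k = 2 * l + 1 + 1 * (2 ^ m - 1) := by omega
    rw [key, Nat.add_mul_mod_self_right]
    exact Nat.mod_eq_of_lt (by omega)

lemma d_testBit_zero (hm : 0 < m) {k : ℕ} (hk : k < 2 ^ m - 1) :
    (2 * k % (2 ^ m - 1)).testBit 0 = k.testBit (m - 1) := by
  rw [d_eq' hm hk, Nat.testBit_eq_decide_div_mod_eq, Nat.testBit_eq_decide_div_mod_eq]
  have hb := div_le_one hm hk
  have key : (2 * (k % 2 ^ (m - 1)) + k / 2 ^ (m - 1)) / 2 ^ 0 % 2 = k / 2 ^ (m - 1) % 2 := by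
    rcases Nat.le_one_iff_eq_zero_or_eq_one.mp hb with h | h <;> rw [h] <;> omega
  rw [key]

lemma d_testBit_succ (hm : 0 < m) {k : ℕ} (hk : k < 2 ^ m - 1) {i : ℕ} (hi : i + 1 < m) :
    (2 * k % (2 ^ m - 1)).testBit (i + 1) = k.testBit i := by
  rw [d_eq' hm hk, Nat.testBit_add_one]
  have hb := div_le_one hm hk
  have hdiv : (2 * (k % 2 ^ (m - 1)) + k / 2 ^ (m - 1)) / 2 = k % 2 ^ (m - 1) := by
    rcases Nat.le_one_iff_eq_zero_or_eq_one.mp hb with h | h <;> rw [h] <;> omega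
  rw [hdiv, Nat.testBit_mod_two_pow]
  simp [show i < m - 1 by omega]

lemma testBit_false_of_ge {x i : ℕ} (hx : x < 2 ^ m) (hi : m ≤ i) : x.testBit i = false :=
  Nat.testBit_eq_false_of_lt (lt_of_lt_of_le hx (Nat.pow_le_pow_right (by norm_num) hi))

lemma n_pos (hm : 0 < m) : 0 < 2 ^ m - 1 := by
  have : 2 ^ 1 ≤ 2 ^ m := Nat.pow_le_pow_right (by norm_num) hm
  omega

lemma d_lt (hm : 0 < m) (k : ℕ) : 2 * k % (2 ^ m - 1) < 2 ^ m - 1 :=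
  Nat.mod_lt _ (n_pos hm)

/-- weight is preserved by doubling mod `2^m - 1`. -/
lemma wtm_d (hm : 0 < m) {k : ℕ} (hk : k < 2 ^ m - 1) :
    wtm m (2 * k % (2 ^ m - 1)) = wtm m k := by
  unfold wtm
  refine Finset.card_nbij' (fun a => (a + (m - 1)) % m) (fun a => (a + 1) % m)
    ?_ ?_ ?_ ?_
  · intro a ha
    simp only [Finset.mem_coe, Finset.mem_filter, Finset.mem_range] at ha ⊢
    rcases ha with ⟨ham, hab⟩
    refine ⟨Nat.mod_lt _ hm, ?_⟩
    match a with
    | 0 =>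
      rw [Nat.zero_add, Nat.mod_eq_of_lt (by omega)]
      rw [d_testBit_zero hm hk] at hab
      exact hab
    | (a' + 1) =>
      have : (a' + 1 + (m - 1)) % m = a' := by
        rw [show a' + 1 + (m-1) = a' + m by omega, Nat.add_mod_right,
          Nat.mod_eq_of_lt (by omega)]
      rw [this]
      rw [d_testBit_succ hm hk (by omega)] at hab
      exact hab
  · intro a ha
    simp only [Finset.mem_coe, Finset.mem_filter, Finset.mem_range] at ha ⊢
    rcases ha with ⟨ham, hab⟩
    refine ⟨Nat.mod_lt _ hm, ?_⟩
    by_cases ha' : a = m - 1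
    · rw [ha', show m - 1 + 1 = m by omega, Nat.mod_self, d_testBit_zero hm hk]
      rw [ha'] at hab; exact hab
    · rw [Nat.mod_eq_of_lt (show a + 1 < m by omega),
        d_testBit_succ hm hk (show a + 1 < m by omega)]
      exact hab
  · intro a ha
    simp only [Finset.mem_coe, Finset.mem_filter, Finset.mem_range] at ha
    rcases ha with ⟨ham, _⟩
    dsimp only
    match a with
    | 0 =>
      rw [Nat.zero_add, Nat.mod_eq_of_lt (show m - 1 < m by omega),
        show m - 1 + 1 = m by omega, Nat.mod_self]
    | (a' + 1) =>
      have h1 : (a' + 1 + (m - 1)) % m = a' := by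
        rw [show a' + 1 + (m-1) = a' + m by omega, Nat.add_mod_right,
          Nat.mod_eq_of_lt (show a' < m by omega)]
      rw [h1, Nat.mod_eq_of_lt (show a' + 1 < m by omega)]
  · intro a ha
    simp only [Finset.mem_coe, Finset.mem_filter, Finset.mem_range] at ha
    rcases ha with ⟨ham, _⟩
    dsimp only
    by_cases ha' : a = m - 1
    · rw [ha', show m - 1 + 1 = m by omega, Nat.mod_self, Nat.zero_add,
        Nat.mod_eq_of_lt (show m - 1 < m by omega)]
    · rw [Nat.mod_eq_of_lt (show a + 1 < m by omega), show a + 1 + (m-1) = a + m by omega,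
        Nat.add_mod_right, Nat.mod_eq_of_lt (show a < m by omega)]

/-- doubling mod `2^m-1` preserves the bitwise subset relation. -/
lemma sub_d_iff (hm : 0 < m) {k j : ℕ} (hk : k < 2 ^ m - 1) (hj : j < 2 ^ m - 1) :
    Sub (2 * k % (2 ^ m - 1)) (2 * j % (2 ^ m - 1)) ↔ Sub k j := by
  constructor
  · intro h i hbit
    have him : i < m := by
      by_contra h'
      rw [testBit_false_of_ge (m := m) (show k < 2 ^ m by omega) (by omega)] at hbit
      exact Bool.false_ne_true hbit
    by_cases hi' : i = m - 1
    · subst hi'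
      have h0 := h 0
      rw [d_testBit_zero hm hk, d_testBit_zero hm hj] at h0
      exact h0 hbit
    · have h1 := h (i + 1)
      rw [d_testBit_succ hm hk (by omega), d_testBit_succ hm hj (by omega)] at h1
      exact h1 hbit
  · intro h i hbit
    have him : i < m := by
      by_contra h'
      have hdk := d_lt hm k
      rw [testBit_false_of_ge (m := m) (show 2 * k % (2 ^ m - 1) < 2 ^ m by omega)
        (by omega)] at hbit
      exact Bool.false_ne_true hbit
    match i with
    | 0 =>
      rw [d_testBit_zero hm hk] at hbit
      rw [d_testBit_zero hm hj]
      exact h _ hbit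
    | (i' + 1) =>
      rw [d_testBit_succ hm hk (by omega)] at hbit
      rw [d_testBit_succ hm hj (by omega)]
      exact h _ hbit

end double
lemma choose_two_mod_two {j k : ℕ} : Nat.choose j k % 2 = 1 ↔ Sub k j := by
  rcases le_or_gt k j with hkj | hkj
  · haveI : Fact (Nat.Prime 2) := ⟨Nat.prime_two⟩
    have hj : j < 2 ^ (j + 1) :=
      lt_of_lt_of_le (Nat.lt_two_pow_self (n := j)) (Nat.pow_le_pow_right (by norm_num) (Nat.le_succ j))
    have hk : k < 2 ^ (j + 1) := lt_of_le_of_lt hkj hj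
    have h := Choose.choose_modEq_prod_range_choose_nat (p := 2) hj hk
    unfold Nat.ModEq at h
    rw [h]
    constructor
    · intro hp i hbit
      have hij : i < j + 1 := by
        by_contra h'
        rw [testBit_false_of_ge (m := j + 1) hk (by omega)] at hbit
        exact Bool.false_ne_true hbit
      have hfac : ∀ t ∈ Finset.range (j+1),
          Nat.choose (j / 2^t % 2) (k / 2^t % 2) % 2 = 1 := by
        intro t ht
        by_contra hodd
        have h2 : (2:ℕ) ∣ Nat.choose (j / 2^t % 2) (k / 2^t % 2) := by omega
        have hdvd : (2:ℕ) ∣ ∏ u ∈ Finset.range (j+1),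
            Nat.choose (j / 2^u % 2) (k / 2^u % 2) :=
          h2.trans (Finset.dvd_prod_of_mem _ ht)
        omega
      have hi := hfac i (Finset.mem_range.mpr hij)
      rw [Nat.testBit_eq_decide_div_mod_eq] at hbit ⊢
      have hbk : k / 2^i % 2 = 1 := of_decide_eq_true hbit
      rw [hbk] at hi
      have hbj : j / 2^i % 2 = 1 := by
        rcases Nat.mod_two_eq_zero_or_one (j / 2^i) with h0 | h1
        · rw [h0] at hi; simp [Nat.choose] at hi
        · exact h1
      simp [hbj]
    · intro hs
      have hfac : ∀ t ∈ Finset.range (j+1),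
          Nat.choose (j / 2^t % 2) (k / 2^t % 2) = 1 := by
        intro t _
        rcases Nat.mod_two_eq_zero_or_one (k / 2^t) with h0 | h1
        · rw [h0]; simp
        · have hbit : k.testBit t = true := by
            rw [Nat.testBit_eq_decide_div_mod_eq]; simp [h1]
          have hjt := hs t hbit
          rw [Nat.testBit_eq_decide_div_mod_eq] at hjt
          have hbj : j / 2^t % 2 = 1 := of_decide_eq_true hjt
          rw [h1, hbj]
          rfl
      rw [Finset.prod_congr rfl hfac, Finset.prod_const_one]
      norm_num
  · rw [Nat.choose_eq_zero_of_lt hkj]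

    simp only [Nat.zero_mod]
    constructor
    · omega
    · intro hs
      exact absurd hs.le (by omega)


section orbit

variable {m : ℕ}

lemma pow_mul_mod_succ (t k : ℕ) :
    2 ^ (t+1) * k % (2 ^ m - 1) = 2 * (2 ^ t * k % (2 ^ m - 1)) % (2 ^ m - 1) := by
  rw [Nat.mul_mod_mod]
  exact congrArg (· % (2 ^ m - 1)) (by ring)

lemma wtm_pow_mul_mod (hm : 0 < m) {k : ℕ} (hk : k < 2 ^ m - 1) (t : ℕ) :
    wtm m (2 ^ t * k % (2 ^ m - 1)) = wtm m k := by
  induction t with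
  | zero => rw [pow_zero, one_mul, Nat.mod_eq_of_lt hk]
  | succ t ih =>
    rw [pow_mul_mod_succ, wtm_d hm (Nat.mod_lt _ (n_pos hm)), ih]

lemma e_d (hm : 0 < m) {j : ℕ} (hj : j < 2 ^ m - 1) :
    2 ^ (m - 1) * (2 * j % (2 ^ m - 1)) % (2 ^ m - 1) = j := by
  rw [Nat.mul_mod_mod, show 2 ^ (m-1) * (2 * j) = 2 ^ m * j by rw [pow_split hm]; ring]
  obtain ⟨c, hc⟩ : ∃ c, 2 ^ m = c + 1 := ⟨2 ^ m - 1, by have := n_pos hm; omega⟩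
  rw [hc, show c + 1 - 1 = c from rfl, show (c+1) * j = j + j * c by ring,
    Nat.add_mul_mod_self_right]
  exact Nat.mod_eq_of_lt (by rw [hc] at hj; omega)

lemma d_e (hm : 0 < m) {j : ℕ} (hj : j < 2 ^ m - 1) :
    2 * (2 ^ (m - 1) * j % (2 ^ m - 1)) % (2 ^ m - 1) = j := by
  rw [Nat.mul_mod_mod, show 2 * (2 ^ (m-1) * j) = 2 ^ m * j by rw [pow_split hm]; ring]
  obtain ⟨c, hc⟩ : ∃ c, 2 ^ m = c + 1 := ⟨2 ^ m - 1, by have := n_pos hm; omega⟩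
  rw [hc, show c + 1 - 1 = c from rfl, show (c+1) * j = j + j * c by ring,
    Nat.add_mul_mod_self_right]
  exact Nat.mod_eq_of_lt (by rw [hc] at hj; omega)

end orbit



section field

variable {F : Type*} [Field F]

lemma cast_choose (h2 : (2:F) = 0) (j k : ℕ) :
    ((Nat.choose j k : ℕ) : F) = if k &&& j = k then 1 else 0 := by
  split_ifs with hs
  · have hodd := choose_two_mod_two.mpr (sub_iff_and.mpr hs)
    obtain ⟨q, hq⟩ : ∃ q, Nat.choose j k = 2*q + 1 := ⟨Nat.choose j k / 2, by omega⟩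
    rw [hq]; push_cast; rw [h2]; ring
  · have hns : ¬ Sub k j := fun hh => hs (sub_iff_and.mp hh)
    have h1 : Nat.choose j k % 2 ≠ 1 := fun hh => hns (choose_two_mod_two.mp hh)
    obtain ⟨q, hq⟩ : ∃ q, Nat.choose j k = 2*q := ⟨Nat.choose j k / 2, by omega⟩
    rw [hq]; push_cast; rw [h2]; ring

lemma vanish_coeff [Fintype F] {N : ℕ} (hN : N ≤ Fintype.card F) {B : ℕ → F}
    (h : ∀ x : F, ∑ k ∈ Finset.range N, B k * x ^ k = 0) {k : ℕ} (hk : k < N) :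
    B k = 0 := by
  classical
  set p : Polynomial F := ∑ k ∈ Finset.range N, Polynomial.C (B k) * Polynomial.X ^ k with hp
  have hdeg : p.natDegree < Fintype.card F := by
    have hle : p.natDegree ≤ N - 1 := by
      apply Polynomial.natDegree_sum_le_of_forall_le
      intro i hi
      refine le_trans (Polynomial.natDegree_C_mul_le _ _) ?_
      rw [Polynomial.natDegree_X_pow]
      exact by simp only [Finset.mem_range] at hi; omega
    omega
  have hzero : p = 0 := by
    apply Polynomial.eq_zero_of_natDegree_lt_card_of_eval_eq_zero' p Finset.univ
    · intro x _
      rw [hp, Polynomial.eval_finset_sum]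
      have : ∀ j ∈ Finset.range N,
          Polynomial.eval x (Polynomial.C (B j) * Polynomial.X ^ j) = B j * x ^ j := by
        intro j _
        simp
      rw [Finset.sum_congr rfl this]
      exact h x
    · rwa [Finset.card_univ]
  have hcoeff : p.coeff k = B k := by
    rw [hp, Polynomial.finset_sum_coeff]
    have : ∀ j ∈ Finset.range N,
        (Polynomial.C (B j) * Polynomial.X ^ j).coeff k = if k = j then B j else 0 := by
      intro j _
      rw [Polynomial.coeff_C_mul, Polynomial.coeff_X_pow]
      split_ifs <;> simp
    rw [Finset.sum_congr rfl this, Finset.sum_ite_eq]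
    simp [Finset.mem_range.mpr hk]
  rw [← hcoeff, hzero, Polynomial.coeff_zero]

lemma expand_diff {N : ℕ} (S : Finset ℕ) (hS : ∀ j ∈ S, j < N) (A : ℕ → F) (β x : F) :
    (∑ j ∈ S, A j * (x + β) ^ j) - ∑ j ∈ S, A j * x ^ j
      = ∑ k ∈ Finset.range N,
          (∑ j ∈ S, if k < j then A j * ((Nat.choose j k : ℕ) : F) * β ^ (j - k) else 0)
            * x ^ k := by
  rw [← Finset.sum_sub_distrib]
  have step1 : ∀ j ∈ S, A j * (x + β) ^ j - A j * x ^ j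
      = ∑ k ∈ Finset.range N,
          (if k < j then A j * ((Nat.choose j k : ℕ) : F) * β ^ (j-k) * x ^ k else 0) := by
    intro j hj
    rw [add_pow, Finset.sum_range_succ]
    have htop : x ^ j * β ^ (j - j) * ((Nat.choose j j : ℕ) : F) = x ^ j := by
      simp
    rw [htop]
    have hsplit : A j * ((∑ k ∈ Finset.range j,
        x ^ k * β ^ (j-k) * ((Nat.choose j k : ℕ):F)) + x ^ j) - A j * x ^ j
        = ∑ k ∈ Finset.range j, A j * (x ^ k * β ^ (j-k) * ((Nat.choose j k : ℕ):F)) := by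
      rw [mul_add, add_sub_cancel_right, Finset.mul_sum]
    rw [hsplit]
    have hrange : Finset.range j = (Finset.range N).filter (· < j) := by
      ext a
      simp only [Finset.mem_filter, Finset.mem_range]
      have := hS j hj
      omega
    rw [hrange, Finset.sum_filter]
    refine Finset.sum_congr rfl fun k _ => ?_
    split_ifs with h
    · ring
    · rfl
  rw [Finset.sum_congr rfl step1, Finset.sum_comm]
  refine Finset.sum_congr rfl fun k _ => ?_
  rw [Finset.sum_mul]
  refine Finset.sum_congr rfl fun j _ => ?_
  rw [ite_mul, zero_mul]

lemma pow_mod_cycle {n : ℕ} (hn : 0 < n) {β : F} (hβ : β ^ n = 1) (a : ℕ) :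
    β ^ (a % n) = β ^ a := by
  conv_rhs => rw [show a = n * (a / n) + a % n from (Nat.div_add_mod a n).symm]
  rw [pow_add, pow_mul, hβ, one_pow, one_mul]

end field


section wt

variable {m : ℕ}

lemma wtm_le_of_sub {k j : ℕ} (h : Sub k j) : wtm m k ≤ wtm m j := by
  unfold wtm
  apply Finset.card_le_card
  intro i hi
  simp only [Finset.mem_filter, Finset.mem_range] at hi ⊢
  exact ⟨hi.1, h i hi.2⟩

lemma ssub_wtm_lt {k j : ℕ} (h : Sub k j) (hne : k ≠ j) (hk : k < 2 ^ m)
    (hj : j < 2 ^ m) : wtm m k < wtm m j := by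
  unfold wtm
  apply Finset.card_lt_card
  rw [Finset.ssubset_iff_subset_ne]
  constructor
  · intro i hi
    simp only [Finset.mem_filter, Finset.mem_range] at hi ⊢
    exact ⟨hi.1, h i hi.2⟩
  · intro heq
    apply hne
    apply Nat.eq_of_testBit_eq
    intro i
    by_cases him : i < m
    · have hiff : k.testBit i = true ↔ j.testBit i = true := by
        simpa [Finset.mem_filter, Finset.mem_range, him] using Finset.ext_iff.mp heq i
      cases hki : k.testBit i <;> cases hji : j.testBit i
      · rfl
      · exact absurd (hiff.mpr hji) (by simp [hki])
      · exact absurd (hiff.mp hki) (by simp [hji])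
      · rfl
    · rw [testBit_false_of_ge (m := m) hk (by omega),
        testBit_false_of_ge (m := m) hj (by omega)]

lemma sub_xor_pow {s i0 : ℕ} (hbit : s.testBit i0 = true) : Sub (s ^^^ 2 ^ i0) s := by
  intro i hi
  rw [Nat.testBit_xor, Nat.testBit_two_pow] at hi
  by_cases hii : i0 = i
  · subst hii
    rw [hbit] at hi
    simp at hi
  · simpa [hii] using hi

lemma xor_pow_ne {s i0 : ℕ} (hbit : s.testBit i0 = true) : s ^^^ 2 ^ i0 ≠ s := by
  intro h
  have := congrArg (fun x => x.testBit i0) h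
  simp only [Nat.testBit_xor, Nat.testBit_two_pow, hbit] at this
  simp at this

lemma wtm_xor_pow {s i0 : ℕ} (him : i0 < m) (hbit : s.testBit i0 = true) :
    wtm m (s ^^^ 2 ^ i0) = wtm m s - 1 := by
  unfold wtm
  have hset : (Finset.range m).filter (fun i => (s ^^^ 2 ^ i0).testBit i)
      = ((Finset.range m).filter (fun i => s.testBit i)).erase i0 := by
    ext a
    simp only [Finset.mem_erase, Finset.mem_filter, Finset.mem_range, Nat.testBit_xor,
      Nat.testBit_two_pow]
    by_cases ha : i0 = a
    · subst ha
      simp [hbit]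
    · have hd : (decide (i0 = a)) = false := by simp [ha]
      rw [hd]
      simp only [Bool.xor_false]
      constructor
      · rintro ⟨h1, h2⟩
        exact ⟨fun hh => ha hh.symm, h1, h2⟩
      · rintro ⟨_, h1, h2⟩
        exact ⟨h1, h2⟩
  rw [hset, Finset.card_erase_of_mem]
  simp only [Finset.mem_filter, Finset.mem_range]
  exact ⟨him, hbit⟩

lemma exists_bit {s : ℕ} (h : 1 ≤ wtm m s) :
    ∃ i0, i0 < m ∧ s.testBit i0 = true := by
  have hne : ((Finset.range m).filter (fun i => s.testBit i)).Nonempty := by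
    apply Finset.card_pos.mp
    unfold wtm at h
    omega
  obtain ⟨i0, hi0⟩ := hne
  simp only [Finset.mem_filter, Finset.mem_range] at hi0
  exact ⟨i0, hi0.1, hi0.2⟩

end wt

/-- Frobenius compatibility of the derivative coefficient function. -/
lemma frob_B {F : Type*} [Field F] {m r' : ℕ} (hm : 0 < m) (h2 : (2:F) = 0)
    {β : F} (hβ : β ≠ 0) (hβ1 : β ^ (2 ^ m - 1) = 1)
    (A : ℕ → F)
    (hA : ∀ j ∈ (Finset.range (2 ^ m - 1)).filter (fun j => wtm m j ≤ r'),
      A (2 * j % (2 ^ m - 1)) = A j ^ 2)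
    {k : ℕ} (hk : k < 2 ^ m - 1) :
    ∑ j ∈ (Finset.range (2 ^ m - 1)).filter (fun j => wtm m j ≤ r'),
        (if 2 * k % (2 ^ m - 1) < j then
          A j * ((Nat.choose j (2 * k % (2 ^ m - 1)) : ℕ) : F)
            * β ^ (j - 2 * k % (2 ^ m - 1)) else 0)
    = (∑ j ∈ (Finset.range (2 ^ m - 1)).filter (fun j => wtm m j ≤ r'),
        (if k < j then A j * ((Nat.choose j k : ℕ) : F) * β ^ (j - k) else 0)) ^ 2 := by
  classical
  haveI hp2 : Fact (Nat.Prime 2) := ⟨Nat.prime_two⟩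
  have hring : ringChar F = 2 := by
    have hdvd : ringChar F ∣ 2 := ringChar.dvd (by exact_mod_cast h2)
    rcases (Nat.prime_two.eq_one_or_self_of_dvd _ hdvd) with h | h
    · exact absurd h CharP.ringChar_ne_one
    · exact h
  haveI hchar : CharP F 2 := hring ▸ ringChar.charP F
  haveI hexp : ExpChar F 2 := ExpChar.prime Nat.prime_two
  have hnpos : 0 < 2 ^ m - 1 := n_pos hm
  have hmemS : ∀ j ∈ (Finset.range (2 ^ m - 1)).filter (fun j => wtm m j ≤ r'),
      j < 2 ^ m - 1 ∧ wtm m j ≤ r' := by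
    intro j hj
    simpa [Finset.mem_filter, Finset.mem_range] using hj
  rw [sum_pow_char 2]
  have hre : ∑ j ∈ (Finset.range (2 ^ m - 1)).filter (fun j => wtm m j ≤ r'),
        (if 2 * k % (2 ^ m - 1) < j then
          A j * ((Nat.choose j (2 * k % (2 ^ m - 1)) : ℕ) : F)
            * β ^ (j - 2 * k % (2 ^ m - 1)) else 0)
      = ∑ j ∈ (Finset.range (2 ^ m - 1)).filter (fun j => wtm m j ≤ r'),
        (if 2 * k % (2 ^ m - 1) < 2 * j % (2 ^ m - 1) then
          A (2 * j % (2 ^ m - 1))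
            * ((Nat.choose (2 * j % (2 ^ m - 1)) (2 * k % (2 ^ m - 1)) : ℕ) : F)
            * β ^ (2 * j % (2 ^ m - 1) - 2 * k % (2 ^ m - 1)) else 0) := by
    refine Finset.sum_nbij' (fun a => 2 ^ (m - 1) * a % (2 ^ m - 1))
      (fun a => 2 * a % (2 ^ m - 1)) ?_ ?_ ?_ ?_ ?_
    · intro a ha
      obtain ⟨haN, haw⟩ := hmemS a ha
      simp only [Finset.mem_filter, Finset.mem_range]
      exact ⟨Nat.mod_lt _ hnpos, by rw [wtm_pow_mul_mod hm haN]; exact haw⟩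
    · intro a ha
      obtain ⟨haN, haw⟩ := hmemS a ha
      simp only [Finset.mem_filter, Finset.mem_range]
      exact ⟨Nat.mod_lt _ hnpos, by rw [wtm_d hm haN]; exact haw⟩
    · intro a ha
      exact d_e hm (hmemS a ha).1
    · intro a ha
      exact e_d hm (hmemS a ha).1
    · intro a ha
      rw [d_e hm (hmemS a ha).1]
  rw [hre]
  refine Finset.sum_congr rfl fun j hj => ?_
  obtain ⟨hjN, hjw⟩ := hmemS j hj
  by_cases hsubkj : k &&& j = k
  · by_cases hkj : k = j
    · subst hkj
      rw [if_neg (lt_irrefl _), if_neg (lt_irrefl _)]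
      simp
    · have hSub : Sub k j := sub_iff_and.mpr hsubkj
      have hklt : k < j := lt_of_le_of_ne hSub.le hkj
      have hSubd : Sub (2 * k % (2 ^ m - 1)) (2 * j % (2 ^ m - 1)) :=
        (sub_d_iff hm hk hjN).mpr hSub
      have hdne : 2 * k % (2 ^ m - 1) ≠ 2 * j % (2 ^ m - 1) := by
        intro h
        apply hkj
        have h1 := e_d hm hk
        have h2' := e_d hm hjN
        rw [h] at h1
        rw [h2'] at h1
        exact h1.symm
      have hdlt : 2 * k % (2 ^ m - 1) < 2 * j % (2 ^ m - 1) :=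
        lt_of_le_of_ne hSubd.le hdne
      rw [if_pos hdlt, if_pos hklt, mul_pow, mul_pow]
      rw [cast_choose h2, cast_choose h2, if_pos (sub_iff_and.mp hSubd), if_pos hsubkj]
      rw [hA j hj]
      have hβeq : β ^ (2 * j % (2 ^ m - 1) - 2 * k % (2 ^ m - 1)) = (β ^ (j - k)) ^ 2 := by
        have e1 : β ^ (2 * j % (2 ^ m - 1)) = β ^ (2 * j) := pow_mod_cycle hnpos hβ1 _
        have e2 : β ^ (2 * k % (2 ^ m - 1)) = β ^ (2 * k) := pow_mod_cycle hnpos hβ1 _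
        rw [pow_sub₀ β hβ hSubd.le, e1, e2, ← pow_sub₀ β hβ (by omega : 2 * k ≤ 2 * j),
          show 2 * j - 2 * k = (j - k) * 2 by omega, pow_mul]
      rw [hβeq]
      ring
  · have hnsub : ¬ Sub k j := fun hh => hsubkj (sub_iff_and.mp hh)
    have hnsubd : ¬ (2 * k % (2 ^ m - 1) &&& 2 * j % (2 ^ m - 1) = 2 * k % (2 ^ m - 1)) :=
      fun hh => hnsub ((sub_d_iff hm hk hjN).mp (sub_iff_and.mpr hh))
    rw [cast_choose h2, cast_choose h2, if_neg hnsubd, if_neg hsubkj]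
    simp

end CDA

end CDAhelpers

/-- For `0 ≤ r ≤ m-2`, the cyclic derivative ascendant of the extended cyclic code
with exponent set `{j ∈ {0,…,2^m-2} : wt(j̄) ≤ r}` (the Reed–Muller code
`RM(r,m)`) is the extended cyclic code with exponent set
`{j ∈ {0,…,2^m-2} : wt(j̄) ≤ r+1}` (the Reed–Muller code `RM(r+1,m)`): all the
derivatives of codewords of `RM(r+1,m)` in all nonzero directions lie in
`RM(r,m)`, and `RM(r+1,m)` has the largest dimension (= size of the exponent set)
among extended cyclic codes with this property.  Equivalently, for every
`s ∈ {0,…,2^m-2}`: `cc(P(s)) ⊆ {j : wt(j̄) ≤ r}` iff `wt(s̄) ≤ r+1`. -/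
theorem cyclicDA_of_RM (m : ℕ) (hm : 0 < m)
    (n : ℕ) (hn : n = 2 ^ m - 1)
    {F : Type*} [Field F] [Fintype F] (hF : Fintype.card F = 2 ^ m)
    (r : ℕ) (hr : r + 2 ≤ m) :
    (∀ β : F, β ≠ 0 →
      derivSet β (extCyclicCode n ((Finset.range n).filter fun j => wtm m j ≤ r + 1))
        ⊆ (extCyclicCode n ((Finset.range n).filter fun j => wtm m j ≤ r) :
            Set (F → F))) ∧
    (∀ S' : Finset ℕ, IsExpSet n S' →
      (∀ β : F, β ≠ 0 →
        derivSet β (extCyclicCode n S')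
          ⊆ (extCyclicCode n ((Finset.range n).filter fun j => wtm m j ≤ r) :
              Set (F → F))) →
      S'.card ≤ ((Finset.range n).filter fun j => wtm m j ≤ r + 1).card) ∧
    ∀ s : ℕ, s < n →
      (ccSet n m (Pset s) ⊆ (Finset.range n).filter (fun j => wtm m j ≤ r)
        ↔ wtm m s ≤ r + 1) := by
  subst hn
  have hm2 : 2 ≤ m := by omega
  have hnpos : 0 < 2 ^ m - 1 := CDA.n_pos hm
  have hNF : 2 ^ m - 1 < Fintype.card F := by rw [hF]; omega
  have h2 : (2 : F) = 0 := by
    have hcast := FiniteField.cast_card_eq_zero F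
    rw [hF] at hcast
    push_cast at hcast
    exact (pow_eq_zero_iff (by omega : m ≠ 0)).mp hcast
  have hβ1 : ∀ β : F, β ≠ 0 → β ^ (2 ^ m - 1) = 1 := fun β hβ => by
    have := FiniteField.pow_card_sub_one_eq_one β hβ
    rwa [hF] at this
  refine ⟨?_, ?_, ?_⟩
  · -- Part 1: derivatives of RM(r+1) lie in RM(r)
    intro β hβ d hd
    obtain ⟨c, hcmem, rfl⟩ := hd
    obtain ⟨A, hA, hAx⟩ := hcmem
    refine ⟨fun k => ∑ j ∈ (Finset.range (2 ^ m - 1)).filter (fun j => wtm m j ≤ r + 1),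
        (if k < j then A j * ((Nat.choose j k : ℕ) : F) * β ^ (j - k) else 0), ?_, ?_⟩
    · intro k hk
      simp only [Finset.mem_filter, Finset.mem_range] at hk
      exact CDA.frob_B hm h2 hβ (hβ1 β hβ) A hA hk.1
    · intro x
      dsimp only
      have hS : ∀ j ∈ (Finset.range (2 ^ m - 1)).filter (fun j => wtm m j ≤ r + 1),
          j < 2 ^ m - 1 := fun j hj => Finset.mem_range.mp (Finset.mem_filter.mp hj).1
      have hexp := CDA.expand_diff (N := 2 ^ m - 1) _ hS A β x
      rw [hAx, hAx, hexp]
      symm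
      apply Finset.sum_filter_of_ne
      intro kk hkk hne
      simp only [Finset.mem_range] at hkk
      by_contra hwkk
      push_neg at hwkk
      apply hne
      have hB0 : (∑ j ∈ (Finset.range (2 ^ m - 1)).filter (fun j => wtm m j ≤ r + 1),
          (if kk < j then A j * ((Nat.choose j kk : ℕ) : F) * β ^ (j - kk) else 0)) = 0 := by
        apply Finset.sum_eq_zero
        intro j hj
        simp only [Finset.mem_filter, Finset.mem_range] at hj
        split_ifs with hlt
        · rw [CDA.cast_choose h2, if_neg, mul_zero, zero_mul]
          intro hsub
          have hS' : CDA.Sub kk j := CDA.sub_iff_and.mpr hsub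
          have := CDA.ssub_wtm_lt (m := m) hS' (by omega) (by omega) (by omega)
          omega
        · rfl
      rw [hB0, zero_mul]
  · -- Part 2: maximality
    intro S' hS'exp hder
    apply Finset.card_le_card
    intro s hsS'
    have hsN : s < 2 ^ m - 1 := hS'exp.1 s hsS'
    simp only [Finset.mem_filter, Finset.mem_range]
    refine ⟨hsN, ?_⟩
    by_contra hw
    push_neg at hw
    have hOrange : ∀ t ∈ cycCoset (2 ^ m - 1) m s, t < 2 ^ m - 1 := by
      intro t ht
      obtain ⟨u, _, rfl⟩ := Finset.mem_image.mp ht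
      exact Nat.mod_lt _ hnpos
    have hsO : s ∈ cycCoset (2 ^ m - 1) m s :=
      Finset.mem_image.mpr ⟨0, Finset.mem_range.mpr hm,
        by rw [pow_zero, one_mul, Nat.mod_eq_of_lt hsN]⟩
    have horbit : ∀ u, 2 ^ u * s % (2 ^ m - 1) ∈ cycCoset (2 ^ m - 1) m s := by
      intro u
      have h1 : (2:ℕ) ^ m ≡ 1 [MOD 2 ^ m - 1] := by
        unfold Nat.ModEq
        have hh := Nat.add_mul_mod_self_right 1 1 (2 ^ m - 1)
        rw [show 1 + 1 * (2 ^ m - 1) = 2 ^ m by omega] at hh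
        exact hh
      have h2' : (2:ℕ) ^ u ≡ 2 ^ (u % m) [MOD 2 ^ m - 1] := by
        conv_lhs => rw [show u = m * (u / m) + u % m from (Nat.div_add_mod u m).symm]
        rw [pow_add, pow_mul]
        calc ((2:ℕ) ^ m) ^ (u / m) * 2 ^ (u % m)
            ≡ 1 ^ (u / m) * 2 ^ (u % m) [MOD 2 ^ m - 1] :=
              Nat.ModEq.mul_right _ (Nat.ModEq.pow _ h1)
          _ = 2 ^ (u % m) := by rw [one_pow, one_mul]
      have h3 := h2'.mul_right s
      unfold Nat.ModEq at h3
      rw [h3]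
      exact Finset.mem_image.mpr ⟨u % m, Finset.mem_range.mpr (Nat.mod_lt _ hm), rfl⟩
    have hall : ∀ u, 2 ^ u * s % (2 ^ m - 1) ∈ S' := by
      intro u
      induction u with
      | zero => rw [pow_zero, one_mul, Nat.mod_eq_of_lt hsN]; exact hsS'
      | succ u ih => rw [CDA.pow_mul_mod_succ]; exact hS'exp.2 _ ih
    have hOS' : cycCoset (2 ^ m - 1) m s ⊆ S' := by
      intro t ht
      obtain ⟨u, _, rfl⟩ := Finset.mem_image.mp ht
      exact hall u
    have hdO : ∀ j, j < 2 ^ m - 1 →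
        (2 * j % (2 ^ m - 1) ∈ cycCoset (2 ^ m - 1) m s ↔ j ∈ cycCoset (2 ^ m - 1) m s) := by
      intro j hj
      constructor
      · intro h
        obtain ⟨u, hu, heq⟩ := Finset.mem_image.mp h
        have hj' : j = 2 ^ (m - 1) * (2 ^ u * s % (2 ^ m - 1)) % (2 ^ m - 1) := by
          rw [heq, CDA.e_d hm hj]
        rw [hj', Nat.mul_mod_mod, ← mul_assoc, ← pow_add]
        exact horbit _
      · intro h
        obtain ⟨u, hu, heq⟩ := Finset.mem_image.mp h
        rw [← heq, ← CDA.pow_mul_mod_succ]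
        exact horbit _
    have hc : (fun x : F => ∑ j ∈ S',
          (if j ∈ cycCoset (2 ^ m - 1) m s then (1:F) else 0) * x ^ j)
        ∈ extCyclicCode (2 ^ m - 1) S' := by
      refine ⟨fun j => if j ∈ cycCoset (2 ^ m - 1) m s then (1:F) else 0, ?_, fun x => rfl⟩
      intro j hj
      have hjN : j < 2 ^ m - 1 := hS'exp.1 j hj
      show (if 2 * j % (2 ^ m - 1) ∈ cycCoset (2 ^ m - 1) m s then (1:F) else 0)
        = (if j ∈ cycCoset (2 ^ m - 1) m s then (1:F) else 0) ^ 2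
      by_cases hjO : j ∈ cycCoset (2 ^ m - 1) m s
      · rw [if_pos ((hdO j hjN).mpr hjO), if_pos hjO, one_pow]
      · rw [if_neg (fun hh => hjO ((hdO j hjN).mp hh)), if_neg hjO]
        ring
    obtain ⟨i0, him, hbit⟩ := CDA.exists_bit (m := m) (s := s) (by omega)
    have hsubk := CDA.sub_xor_pow (s := s) hbit
    have hnek := CDA.xor_pow_ne (s := s) hbit
    have hks : s ^^^ 2 ^ i0 < s := lt_of_le_of_ne hsubk.le hnek
    have hwk : wtm m (s ^^^ 2 ^ i0) = wtm m s - 1 := CDA.wtm_xor_pow him hbit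
    set k := s ^^^ 2 ^ i0 with hkdef
    have hkN : k < 2 ^ m - 1 := by omega
    have hwkr : r < wtm m k := by
      have hle := CDA.wtm_le_of_sub (m := m) hsubk
      omega
    have hBk0 : ∀ β : F, (∑ j ∈ S', if k < j then
          (if j ∈ cycCoset (2 ^ m - 1) m s then (1:F) else 0)
            * ((Nat.choose j k : ℕ) : F) * β ^ (j - k) else 0) = 0 := by
      intro β
      by_cases hβ : β = 0
      · subst hβ
        apply Finset.sum_eq_zero
        intro j hj
        by_cases h1 : k < j
        · rw [if_pos h1, zero_pow (show j - k ≠ 0 by omega), mul_zero]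
        · rw [if_neg h1]
      · have hd := hder β hβ ⟨_, hc, rfl⟩
        obtain ⟨A', hA'f, hA'x⟩ := hd
        have hx : ∀ x : F, ∑ kk ∈ Finset.range (2 ^ m - 1),
            ((∑ j ∈ S', if kk < j then
                (if j ∈ cycCoset (2 ^ m - 1) m s then (1:F) else 0)
                  * ((Nat.choose j kk : ℕ) : F) * β ^ (j - kk) else 0)
              - (if wtm m kk ≤ r then A' kk else 0)) * x ^ kk = 0 := by
          intro x
          have e1 := CDA.expand_diff (N := 2 ^ m - 1) S' hS'exp.1
            (fun j => if j ∈ cycCoset (2 ^ m - 1) m s then (1:F) else 0) β x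
          have e2' : (∑ j ∈ S', (if j ∈ cycCoset (2 ^ m - 1) m s then (1:F) else 0)
                * (x + β) ^ j)
              - (∑ j ∈ S', (if j ∈ cycCoset (2 ^ m - 1) m s then (1:F) else 0) * x ^ j)
              = ∑ kk ∈ (Finset.range (2 ^ m - 1)).filter (fun kk => wtm m kk ≤ r),
                  A' kk * x ^ kk := hA'x x
          have e4 : ∑ kk ∈ Finset.range (2 ^ m - 1),
              (∑ j ∈ S', if kk < j then
                (if j ∈ cycCoset (2 ^ m - 1) m s then (1:F) else 0)
                  * ((Nat.choose j kk : ℕ) : F) * β ^ (j - kk) else 0) * x ^ kk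
              = ∑ kk ∈ (Finset.range (2 ^ m - 1)).filter (fun kk => wtm m kk ≤ r),
                  A' kk * x ^ kk := e1.symm.trans e2'
          have e5 : ∑ kk ∈ Finset.range (2 ^ m - 1),
              (if wtm m kk ≤ r then A' kk else 0) * x ^ kk
              = ∑ kk ∈ (Finset.range (2 ^ m - 1)).filter (fun kk => wtm m kk ≤ r),
                  A' kk * x ^ kk := by
            rw [Finset.sum_filter]
            exact Finset.sum_congr rfl fun kk _ => by rw [ite_mul, zero_mul]
          simp only [sub_mul]
          rw [Finset.sum_sub_distrib, e4, e5, sub_self]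
        have hvan := CDA.vanish_coeff (le_of_lt hNF) hx hkN
        rwa [if_neg (show ¬ wtm m k ≤ r by omega), sub_zero] at hvan
    have hre : ∀ x : F, ∑ e ∈ Finset.range (2 ^ m - 1),
        (if k + e ∈ S' ∧ 0 < e then
          (if k + e ∈ cycCoset (2 ^ m - 1) m s then (1:F) else 0)
            * ((Nat.choose (k + e) k : ℕ) : F) else 0) * x ^ e
        = ∑ j ∈ S', if k < j then
            (if j ∈ cycCoset (2 ^ m - 1) m s then (1:F) else 0)
              * ((Nat.choose j k : ℕ) : F) * x ^ (j - k) else 0 := by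
      intro x
      have lhs_eq : ∑ e ∈ Finset.range (2 ^ m - 1),
          (if k + e ∈ S' ∧ 0 < e then
            (if k + e ∈ cycCoset (2 ^ m - 1) m s then (1:F) else 0)
              * ((Nat.choose (k + e) k : ℕ) : F) else 0) * x ^ e
          = ∑ e ∈ (Finset.range (2 ^ m - 1)).filter (fun e => k + e ∈ S' ∧ 0 < e),
            (if k + e ∈ cycCoset (2 ^ m - 1) m s then (1:F) else 0)
              * ((Nat.choose (k + e) k : ℕ) : F) * x ^ e := by
        rw [Finset.sum_filter]
        exact Finset.sum_congr rfl fun e _ => by rw [ite_mul, zero_mul]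
      have rhs_eq : (∑ j ∈ S', if k < j then
            (if j ∈ cycCoset (2 ^ m - 1) m s then (1:F) else 0)
              * ((Nat.choose j k : ℕ) : F) * x ^ (j - k) else 0)
          = ∑ j ∈ S'.filter (fun j => k < j),
            (if j ∈ cycCoset (2 ^ m - 1) m s then (1:F) else 0)
              * ((Nat.choose j k : ℕ) : F) * x ^ (j - k) := by
        rw [Finset.sum_filter]
      rw [lhs_eq, rhs_eq]
      refine Finset.sum_nbij' (fun e => k + e) (fun j => j - k) ?_ ?_ ?_ ?_ ?_
      · intro e he
        simp only [Finset.mem_filter, Finset.mem_range] at he ⊢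
        exact ⟨he.2.1, by omega⟩
      · intro j hj
        simp only [Finset.mem_filter, Finset.mem_range] at hj ⊢
        have hjN : j < 2 ^ m - 1 := hS'exp.1 j hj.1
        refine ⟨by omega, ?_, by omega⟩
        rw [show k + (j - k) = j by omega]
        exact hj.1
      · intro e he
        omega
      · intro j hj
        simp only [Finset.mem_filter] at hj
        omega
      · intro e he
        rw [show k + e - k = e by omega]
    have hxq : ∀ x : F, ∑ e ∈ Finset.range (2 ^ m - 1),
        (if k + e ∈ S' ∧ 0 < e then
          (if k + e ∈ cycCoset (2 ^ m - 1) m s then (1:F) else 0)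
            * ((Nat.choose (k + e) k : ℕ) : F) else 0) * x ^ e = 0 :=
      fun x => (hre x).trans (hBk0 x)
    have hfin := CDA.vanish_coeff (le_of_lt hNF) hxq (show s - k < 2 ^ m - 1 by omega)
    rw [show k + (s - k) = s by omega] at hfin
    rw [if_pos ⟨hsS', show 0 < s - k by omega⟩, if_pos hsO] at hfin
    rw [one_mul, CDA.cast_choose h2, if_pos (CDA.sub_iff_and.mp hsubk)] at hfin
    exact one_ne_zero hfin
  · intro s hs
    constructor
    · intro hcc
      by_contra hw
      push_neg at hw
      obtain ⟨i0, him, hbit⟩ := CDA.exists_bit (m := m) (s := s) (by omega)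
      have hsub := CDA.sub_xor_pow (s := s) hbit
      have hne := CDA.xor_pow_ne (s := s) hbit
      have hks : s ^^^ 2 ^ i0 < s := lt_of_le_of_ne hsub.le hne
      have hkP : s ^^^ 2 ^ i0 ∈ Pset s := by
        unfold Pset
        simp only [Finset.mem_filter, Finset.mem_range]
        exact ⟨by omega, CDA.sub_iff_or.mp hsub, hne⟩
      have hkcc : s ^^^ 2 ^ i0 ∈ ccSet (2 ^ m - 1) m (Pset s) := by
        apply Finset.mem_biUnion.mpr
        refine ⟨s ^^^ 2 ^ i0, hkP, ?_⟩
        unfold cycCoset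
        apply Finset.mem_image.mpr
        exact ⟨0, Finset.mem_range.mpr hm,
          by rw [pow_zero, one_mul, Nat.mod_eq_of_lt (by omega)]⟩
      have hmem := hcc hkcc
      simp only [Finset.mem_filter, Finset.mem_range] at hmem
      have hwk := CDA.wtm_xor_pow him hbit
      omega
    · intro hwt t ht
      obtain ⟨k, hkP, hkcyc⟩ := Finset.mem_biUnion.mp ht
      unfold Pset at hkP
      simp only [Finset.mem_filter, Finset.mem_range] at hkP
      obtain ⟨hk1, hk2, hk3⟩ := hkP
      have hsub := CDA.sub_iff_or.mpr hk2
      have hks : k < s := lt_of_le_of_ne hsub.le hk3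
      have hkN : k < 2 ^ m - 1 := by omega
      unfold cycCoset at hkcyc
      obtain ⟨u, hu, rfl⟩ := Finset.mem_image.mp hkcyc
      simp only [Finset.mem_filter, Finset.mem_range]
      refine ⟨Nat.mod_lt _ (CDA.n_pos hm), ?_⟩
      rw [CDA.wtm_pow_mul_mod hm hkN u]
      have := CDA.ssub_wtm_lt (m := m) hsub hk3 (by omega) (by omega)
      omega
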